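/- If the fundamental tensor F satisfies the defining condition of class F₉, then the torsion tensor T¹ of the first natural connection satisfies T¹(x,y,z) = η(x)T¹(ξ,y,z) − η(y)T¹(ξ,x,z) and T¹(ξ,y,z) = T¹(ξ,z,y) = −T¹(ξ,φy,φz) for all x, y, z ∈ V. -/
import Mathlib


open scoped RealInnerProductSpace

noncomputable section

variable {V : Type*} [NormedAddCommGroup V] [InnerProductSpace ℝ V]

/-- A Riemannian Π-structure on a real inner product space `V`:
a linear map `phi`, a vector `xi` (with dual form `η x = ⟪x, xi⟫`) satisfying
the defining algebraic identities. -/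
structure PiStruct (V : Type*) [NormedAddCommGroup V] [InnerProductSpace ℝ V] where
  phi : V →ₗ[ℝ] V
  xi : V
  phi_xi : phi xi = 0
  phi_phi : ∀ x : V, phi (phi x) = x - (⟪x, xi⟫ : ℝ) • xi
  eta_phi : ∀ x : V, ⟪phi x, xi⟫ = 0
  eta_xi : ⟪xi, xi⟫ = (1 : ℝ)
  g_phi_phi : ∀ x y : V, ⟪phi x, phi y⟫ = ⟪x, y⟫ - ⟪x, xi⟫ * ⟪y, xi⟫
  g_phi_symm : ∀ x y : V, ⟪phi x, y⟫ = ⟪x, phi y⟫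

/-- Trilinear real-valued maps on `V`. -/
abbrev Tri (V : Type*) [NormedAddCommGroup V] [InnerProductSpace ℝ V] :=
  V →ₗ[ℝ] V →ₗ[ℝ] V →ₗ[ℝ] ℝ

/-- The 1-form `η(x) = g(x, ξ)`. -/
def PiStruct.eta (P : PiStruct V) (x : V) : ℝ := ⟪x, P.xi⟫

/-- `F` is a fundamental tensor for the Π-structure `P`. -/
def IsFund (P : PiStruct V) (F : Tri V) : Prop :=
  (∀ x y z : V, F x y z = F x z y) ∧
  (∀ x y z : V, F x y z =
    -F x (P.phi y) (P.phi z) + P.eta y * F x P.xi z + P.eta z * F x y P.xi)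

/-- The Nijenhuis tensor of `F`. -/
def Nij (P : PiStruct V) (F : Tri V) (x y z : V) : ℝ :=
  F (P.phi x) y z - F (P.phi y) x z - F x y (P.phi z) + F y x (P.phi z)
    + P.eta z * (F x (P.phi y) P.xi - F y (P.phi x) P.xi)

/-- The potential of the first natural connection. -/
def Q1 (P : PiStruct V) (F : Tri V) (x y z : V) : ℝ :=
  -(1/2) * F x (P.phi y) z - (1/2) * P.eta z * F x (P.phi y) P.xi
    + P.eta y * F x (P.phi z) P.xi

/-- The potential of the second natural connection. -/
def Q2 (P : PiStruct V) (F : Tri V) (x y z : V) : ℝ :=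
  Q1 P F x y z - (1/8) * (Nij P F (P.phi (P.phi z)) (P.phi (P.phi y)) (P.phi (P.phi x))
    + 2 * P.eta x * Nij P F (P.phi z) (P.phi y) P.xi)

/-- The torsion tensor of the first natural connection. -/
def T1 (P : PiStruct V) (F : Tri V) (x y z : V) : ℝ :=
  -(1/2) * (F x (P.phi y) z - F y (P.phi x) z)
    - (1/2) * P.eta z * (F x (P.phi y) P.xi - F y (P.phi x) P.xi)
    + P.eta y * F x (P.phi z) P.xi - P.eta x * F y (P.phi z) P.xi

/-- The torsion tensor of the second natural connection. -/
def T2 (P : PiStruct V) (F : Tri V) (x y z : V) : ℝ :=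
  Q2 P F x y z - Q2 P F y x z

/-- Identity (*) for a torsion-like tensor `T`. -/
def StarId (P : PiStruct V) (T : V → V → V → ℝ) : Prop :=
  ∀ x y z : V,
    T x y z + T y z x + T (P.phi x) y (P.phi z) + T y (P.phi z) (P.phi x)
    - P.eta x * (T P.xi y z + T y z P.xi - P.eta y * T P.xi z P.xi)
    - P.eta y * (T x P.xi z + T P.xi z x + T (P.phi x) P.xi (P.phi z)
        + T P.xi (P.phi z) (P.phi x))
    - P.eta z * (T x y P.xi + T y P.xi x - P.eta y * T x P.xi P.xi) = 0

/-- The defining condition of the basic class F₉. -/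
def ClassF9 (P : PiStruct V) (F : Tri V) : Prop :=
  (∀ x y z : V, F x y z = F x y P.xi * P.eta z + F x z P.xi * P.eta y) ∧
  (∀ x y : V, F x y P.xi = -F y x P.xi) ∧
  (∀ x y : V, F x y P.xi = -F (P.phi x) (P.phi y) P.xi)

/-- characterisation of the torsion `T¹` in the class F₉. -/
theorem classF9_T1_properties
    [FiniteDimensional ℝ V] (n : ℕ) (hn : 1 ≤ n)
    (hdim : Module.finrank ℝ V = 2 * n + 1)
    (P : PiStruct V) (F : Tri V) (hF : IsFund P F)
    (h9 : ClassF9 P F) :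
    (∀ x y z : V, T1 P F x y z =
      P.eta x * T1 P F P.xi y z - P.eta y * T1 P F P.xi x z) ∧
    (∀ y z : V, T1 P F P.xi y z = T1 P F P.xi z y) ∧
    (∀ y z : V, T1 P F P.xi y z = -T1 P F P.xi (P.phi y) (P.phi z)) := by
  obtain ⟨h1, h2, h3⟩ := h9
  have hηφ : ∀ x : V, P.eta (P.phi x) = 0 := P.eta_phi
  have hηξ : P.eta P.xi = 1 := P.eta_xi
  have hF0 : ∀ x : V, F x P.xi P.xi = 0 := by
    intro x
    have e := h3 x P.xi
    rw [P.phi_xi] at e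
    simpa using e
  have hkey : ∀ x y : V, F x (P.phi y) P.xi = F y (P.phi x) P.xi := by
    intro x y
    have e := h3 x (P.phi y)
    rw [P.phi_phi y] at e
    have e2 : F (P.phi x) (y - (⟪y, P.xi⟫ : ℝ) • P.xi) P.xi
        = F (P.phi x) y P.xi - (⟪y, P.xi⟫ : ℝ) * F (P.phi x) P.xi P.xi := by
      simp [map_sub, map_smul, smul_eq_mul]
    rw [e2, hF0 (P.phi x)] at e
    have e3 := h2 y (P.phi x)
    linarith
  have hξ0 : ∀ z : V, F P.xi (P.phi z) P.xi = 0 := by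
    intro z
    have := h2 P.xi (P.phi z)
    have := hF0 (P.phi z)
    linarith
  have hT : ∀ x y z : V, T1 P F x y z
      = P.eta y * F x (P.phi z) P.xi - P.eta x * F y (P.phi z) P.xi := by
    intro x y z
    have e1 := h1 x (P.phi y) z
    have e2 := h1 y (P.phi x) z
    rw [hηφ] at e1 e2
    unfold T1
    rw [e1, e2, hkey x y]
    ring
  have hTξ : ∀ y z : V, T1 P F P.xi y z = -F y (P.phi z) P.xi := by
    intro y z
    rw [hT, hξ0, hηξ]
    ring
  refine ⟨fun x y z => ?_, fun y z => ?_, fun y z => ?_⟩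
  · rw [hT, hTξ, hTξ]; ring
  · rw [hTξ, hTξ, hkey]
  · rw [hTξ, hTξ]
    linarith [h3 y (P.phi z)]
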